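/- If p ∈ ℝ^d is a maximizer (i.e. all entries of p are positive, p_1 = 1, and min_{w ∈ W_d} G(p,w) ≥ min_{w ∈ W_d} G(q,w) for every q in the positive orthant), then there exists k ∈ {2,...,d} with D_k(p) = D_1(p). -/

import Mathlib

def wvec (d : ℕ) (j : Fin d) : Fin d → ℕ :=
  fun i => if i < j then 0 else if i = j then (j : ℕ) + 1 else (i : ℕ)

noncomputable def G (d : ℕ) (p : Fin d → ℝ) (w : Fin d → ℕ) : ℝ :=
  (∏ i, p i) / (Real.sqrt (∑ i, ((w i : ℝ)) ^ 2 * p i ^ 2)) ^ d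

noncomputable def minG (d : ℕ) (p : Fin d → ℝ) : ℝ :=
  ⨅ j : Fin d, G d p (wvec d j)

noncomputable def D (d : ℕ) (j : Fin d) (p : Fin d → ℝ) : ℝ :=
  Real.sqrt (∑ i, ((wvec d j i : ℝ)) ^ 2 * p i ^ 2)

/-- `p*`: `p*_1 = 1`, `p*_2 = 1/√3`, `p*_j = √(2/3)/(j−1)` for `3 ≤ j ≤ d`
(0-based: index `i` has 1-based position `i+1`, so the denominator `j−1` is `i`). -/
noncomputable def pstar (d : ℕ) : Fin d → ℝ :=
  fun i => if (i : ℕ) = 0 then 1 else if (i : ℕ) = 1 then 1 / Real.sqrt 3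
    else Real.sqrt (2 / 3) / ((i : ℕ) : ℝ)
open Finset Filter

section aux

lemma wvec_self (d : ℕ) (j : Fin d) : wvec d j j = (j : ℕ) + 1 := by
  simp [wvec]

lemma sumD_pos {d : ℕ} {p : Fin d → ℝ} (hp : ∀ i, 0 < p i) (j : Fin d) :
    0 < ∑ i, ((wvec d j i : ℝ)) ^ 2 * p i ^ 2 := by
  refine Finset.sum_pos' (fun i _ => by positivity) ⟨j, mem_univ j, ?_⟩
  have := hp j
  rw [wvec_self]
  positivity

lemma D_pos {d : ℕ} {p : Fin d → ℝ} (hp : ∀ i, 0 < p i) (j : Fin d) :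
    0 < D d j p := Real.sqrt_pos.mpr (sumD_pos hp j)

lemma D_sq {d : ℕ} {p : Fin d → ℝ} (j : Fin d) :
    (D d j p) ^ 2 = ∑ i, ((wvec d j i : ℝ)) ^ 2 * p i ^ 2 :=
  Real.sq_sqrt (Finset.sum_nonneg (fun i _ => by positivity))

lemma G_eq {d : ℕ} (p : Fin d → ℝ) (j : Fin d) :
    G d p (wvec d j) = (∏ i, p i) / (D d j p) ^ d := rfl

lemma G_pos {d : ℕ} {p : Fin d → ℝ} (hp : ∀ i, 0 < p i) (j : Fin d) :
    0 < G d p (wvec d j) := by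
  rw [G_eq]
  have h1 : 0 < ∏ i, p i := Finset.prod_pos (fun i _ => hp i)
  have h2 := D_pos hp j
  positivity

lemma minG_le {d : ℕ} (hd : 0 < d) (p : Fin d → ℝ) (j : Fin d) :
    minG d p ≤ G d p (wvec d j) := by
  have : Nonempty (Fin d) := ⟨⟨0, hd⟩⟩
  exact ciInf_le (Set.Finite.bddBelow (Set.finite_range _)) j

lemma exists_minG {d : ℕ} (hd : 0 < d) (p : Fin d → ℝ) :
    ∃ j, minG d p = G d p (wvec d j) := by
  have : Nonempty (Fin d) := ⟨⟨0, hd⟩⟩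
  obtain ⟨j, hj⟩ := Finite.exists_min (fun j => G d p (wvec d j))
  exact ⟨j, le_antisymm (minG_le hd p j) (le_ciInf hj)⟩

lemma prod_update' {d : ℕ} (p : Fin d → ℝ) (m : Fin d) (x : ℝ) :
    ∏ i, Function.update p m x i = x * ∏ i ∈ univ.erase m, p i := by
  rw [Finset.prod_update_of_mem (mem_univ m), Finset.sdiff_singleton_eq_erase]

lemma sum_update' {d : ℕ} (w : Fin d → ℕ) (p : Fin d → ℝ) (m : Fin d) (x : ℝ) :
    ∑ i, (w i : ℝ) ^ 2 * (Function.update p m x i) ^ 2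
      = (w m : ℝ) ^ 2 * x ^ 2 + ∑ i ∈ univ.erase m, (w i : ℝ) ^ 2 * (p i) ^ 2 := by
  have : (fun i => (w i : ℝ) ^ 2 * (Function.update p m x i) ^ 2)
      = Function.update (fun i => (w i : ℝ) ^ 2 * (p i) ^ 2) m ((w m : ℝ) ^ 2 * x ^ 2) := by
    funext i
    rcases eq_or_ne i m with rfl | h
    · simp
    · simp [Function.update_of_ne h]
  rw [this, Finset.sum_update_of_mem (mem_univ m), Finset.sdiff_singleton_eq_erase]

lemma G_update {d : ℕ} (p : Fin d → ℝ) (m : Fin d) (x : ℝ) (j : Fin d) :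
    G d (Function.update p m x) (wvec d j)
      = (x * ∏ i ∈ univ.erase m, p i) /
        (Real.sqrt ((wvec d j m : ℝ) ^ 2 * x ^ 2
          + ∑ i ∈ univ.erase m, (wvec d j i : ℝ) ^ 2 * (p i) ^ 2)) ^ d := by
  unfold G
  rw [prod_update', sum_update']

lemma exists_perturb (B C a pm : ℝ) (hB : 0 < B) (hpm : 0 < pm) (hC : 0 ≤ C)
    (ha : 0 < a) (d : ℕ) (hd : 1 ≤ d) (hne : a * pm ^ 2 + C ≠ (d : ℝ) * (a * pm ^ 2))
    (P : ℝ → Prop) (hP : ∀ᶠ x in nhds pm, P x) :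
    ∃ x, P x ∧ (pm * B) ^ 2 / (a * pm ^ 2 + C) ^ d < (x * B) ^ 2 / (a * x ^ 2 + C) ^ d := by
  set S : ℝ := a * pm ^ 2 + C with hSdef
  have hS : 0 < S := by positivity
  set g : ℝ → ℝ := fun x => (x * B) ^ 2 / (a * x ^ 2 + C) ^ d with hgdef
  have h0 : HasDerivAt (fun x : ℝ => x * B) B pm := by
    simpa using (hasDerivAt_id pm).mul_const B
  have hN : HasDerivAt (fun x : ℝ => (x * B) ^ 2) (2 * (pm * B) ^ 1 * B) pm := h0.pow 2
  have hu : HasDerivAt (fun x : ℝ => a * x ^ 2 + C) (a * (2 * pm ^ 1)) pm :=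
    ((hasDerivAt_pow 2 pm).const_mul a).add_const C
  have hE : HasDerivAt (fun x : ℝ => (a * x ^ 2 + C) ^ d)
      ((d : ℝ) * (a * pm ^ 2 + C) ^ (d - 1) * (a * (2 * pm ^ 1))) pm := hu.pow d
  have hEne : (a * pm ^ 2 + C) ^ d ≠ 0 := ne_of_gt (pow_pos hS d)
  have hder0 := hN.div hE hEne
  set c : ℝ := 2 * B ^ 2 * pm * S ^ (d - 1) * (S - (d : ℝ) * (a * pm ^ 2)) / (S ^ d) ^ 2
    with hcdef
  have hSd : S ^ d = S ^ (d - 1) * S := by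
    rw [← pow_succ]; congr 1; omega
  have hceq : (2 * (pm * B) ^ 1 * B * (a * pm ^ 2 + C) ^ d -
      (pm * B) ^ 2 * ((d : ℝ) * (a * pm ^ 2 + C) ^ (d - 1) * (a * (2 * pm ^ 1)))) /
      ((a * pm ^ 2 + C) ^ d) ^ 2 = c := by
    rw [hcdef, ← hSdef, hSd]; ring
  rw [hceq] at hder0
  have hts := hasDerivAt_iff_tendsto_slope.mp hder0
  have hfac : 0 < 2 * B ^ 2 * pm * S ^ (d - 1) := by positivity
  have hden : 0 < ((S : ℝ) ^ d) ^ 2 := by positivity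
  rcases hne.lt_or_gt with hlt | hgt
  · have hc : c < 0 := by
      rw [hcdef]
      apply div_neg_of_neg_of_pos _ hden
      have : S - (d : ℝ) * (a * pm ^ 2) < 0 := by linarith
      exact mul_neg_of_pos_of_neg hfac this
    have h1 : ∀ᶠ x in nhdsWithin pm {pm}ᶜ, slope g pm x < 0 :=
      hts.eventually (eventually_lt_nhds hc)
    have hsub : nhdsWithin pm (Set.Iio pm) ≤ nhdsWithin pm {pm}ᶜ :=
      nhdsWithin_mono pm (fun x hx => ne_of_lt hx)
    have h2 : ∀ᶠ x in nhdsWithin pm (Set.Iio pm), slope g pm x < 0 := h1.filter_mono hsub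
    have h3 : ∀ᶠ x in nhdsWithin pm (Set.Iio pm), P x := hP.filter_mono nhdsWithin_le_nhds
    have h4 : ∀ᶠ x in nhdsWithin pm (Set.Iio pm), x ∈ Set.Iio pm :=
      eventually_mem_nhdsWithin
    obtain ⟨x, ⟨hx1, hx2⟩, hx3⟩ := ((h2.and h3).and h4).exists
    refine ⟨x, hx2, ?_⟩
    have hxd : x - pm < 0 := sub_neg.mpr hx3
    have h5 := mul_pos_of_neg_of_neg
      (by rwa [slope_def_field] at hx1 : (g x - g pm) / (x - pm) < 0) hxd
    rw [div_mul_cancel₀ _ (ne_of_lt hxd)] at h5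
    have : g pm < g x := by linarith
    simpa [hgdef] using this
  · have hc : 0 < c := by
      rw [hcdef]
      apply div_pos _ hden
      have : 0 < S - (d : ℝ) * (a * pm ^ 2) := by linarith
      exact mul_pos hfac this
    have h1 : ∀ᶠ x in nhdsWithin pm {pm}ᶜ, 0 < slope g pm x :=
      hts.eventually (eventually_gt_nhds hc)
    have hsub : nhdsWithin pm (Set.Ioi pm) ≤ nhdsWithin pm {pm}ᶜ :=
      nhdsWithin_mono pm (fun x hx => ne_of_gt hx)
    have h2 : ∀ᶠ x in nhdsWithin pm (Set.Ioi pm), 0 < slope g pm x := h1.filter_mono hsub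
    have h3 : ∀ᶠ x in nhdsWithin pm (Set.Ioi pm), P x := hP.filter_mono nhdsWithin_le_nhds
    have h4 : ∀ᶠ x in nhdsWithin pm (Set.Ioi pm), x ∈ Set.Ioi pm :=
      eventually_mem_nhdsWithin
    obtain ⟨x, ⟨hx1, hx2⟩, hx3⟩ := ((h2.and h3).and h4).exists
    refine ⟨x, hx2, ?_⟩
    have hxd : 0 < x - pm := sub_pos.mpr hx3
    have h5 := mul_pos
      (by rwa [slope_def_field] at hx1 : 0 < (g x - g pm) / (x - pm)) hxd
    rw [div_mul_cancel₀ _ (ne_of_gt hxd)] at h5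
    have : g pm < g x := by linarith
    simpa [hgdef] using this

end aux

/-- If `p` is a maximizer, then some `k ∈ {2,…,d}` (0-based: `1 ≤ k`) satisfies
`D_k(p) = D_1(p)`. -/
theorem stmt6 (d : ℕ) (hd : 2 ≤ d) (p : Fin d → ℝ)
    (hp : ∀ i, 0 < p i) (h1 : p ⟨0, by omega⟩ = 1)
    (hmax : ∀ q : Fin d → ℝ, (∀ i, 0 < q i) → minG d q ≤ minG d p) :
    ∃ k : Fin d, 1 ≤ (k : ℕ) ∧ D d k p = D d ⟨0, by omega⟩ p := by
  by_contra hcon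
  push_neg at hcon
  have hd0 : 0 < d := by omega
  have hd1 : 1 ≤ d := by omega
  set i0 : Fin d := ⟨0, by omega⟩ with hi0def
  set i1 : Fin d := ⟨1, by omega⟩ with hi1def
  have hi0v : (i0 : ℕ) = 0 := rfl
  have hi1v : (i1 : ℕ) = 1 := rfl
  have h1' : p i0 = 1 := h1
  have hcon' : ∀ k : Fin d, 1 ≤ (k : ℕ) → D d k p ≠ D d i0 p := hcon
  have hne : Nonempty (Fin d) := ⟨i0⟩
  have key : ∀ q : Fin d → ℝ, (∀ i, 0 < q i) →
      (∀ j : Fin d, minG d p < G d q (wvec d j)) → False := by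
    intro q hq hlt
    obtain ⟨j0, hj0⟩ := exists_minG hd0 q
    have h := hmax q hq
    rw [hj0] at h
    exact absurd h (not_le.mpr (hlt j0))
  have hDpos : ∀ j, 0 < D d j p := D_pos hp
  have hPpos : 0 < ∏ i, p i := Finset.prod_pos (fun i _ => hp i)
  have hGcomp : ∀ j j' : Fin d, D d j p < D d j' p →
      G d p (wvec d j') < G d p (wvec d j) := by
    intro j j' hlt
    rw [G_eq, G_eq]
    exact div_lt_div_of_pos_left hPpos (pow_pos (hDpos j) d)
      (pow_lt_pow_left₀ hlt (le_of_lt (hDpos j)) (by omega))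
  -- general continuity/eventually facts
  have contG : ∀ (m j : Fin d),
      ContinuousAt (fun x => G d (Function.update p m x) (wvec d j)) (p m) := by
    intro m j
    have hrw : (fun x => G d (Function.update p m x) (wvec d j)) = fun x =>
        (x * ∏ i ∈ Finset.univ.erase m, p i) /
        (Real.sqrt ((wvec d j m : ℝ) ^ 2 * x ^ 2
          + ∑ i ∈ Finset.univ.erase m, (wvec d j i : ℝ) ^ 2 * (p i) ^ 2)) ^ d :=
      funext (fun x => G_update p m x j)
    rw [hrw]
    have hval : (wvec d j m : ℝ) ^ 2 * (p m) ^ 2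
        + ∑ i ∈ Finset.univ.erase m, (wvec d j i : ℝ) ^ 2 * (p i) ^ 2
        = ∑ i, (wvec d j i : ℝ) ^ 2 * (p i) ^ 2 := by
      rw [← sum_update' (wvec d j) p m (p m), Function.update_eq_self]
    apply ContinuousAt.div (by fun_prop) (by fun_prop)
    have harg : 0 < (wvec d j m : ℝ) ^ 2 * (p m) ^ 2
        + ∑ i ∈ Finset.univ.erase m, (wvec d j i : ℝ) ^ 2 * (p i) ^ 2 := by
      rw [hval]; exact sumD_pos hp j
    exact pow_ne_zero _ (ne_of_gt (Real.sqrt_pos.mpr harg))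
  have evG : ∀ (m j : Fin d) (c : ℝ), c < G d p (wvec d j) →
      ∀ᶠ x in nhds (p m), c < G d (Function.update p m x) (wvec d j) := by
    intro m j c hc
    have hgt : c < G d (Function.update p m (p m)) (wvec d j) := by
      rw [Function.update_eq_self]; exact hc
    exact (contG m j).eventually (eventually_gt_nhds hgt)
  by_cases hA : ∀ j, D d j p ≤ D d i0 p
  · -- Case A : D_0 is the max, and strictly so for j ≠ i0
    have hstrict : ∀ j, j ≠ i0 → D d j p < D d i0 p := by
      intro j hj
      refine lt_of_le_of_ne (hA j) (hcon' j ?_)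
      have : (j : ℕ) ≠ 0 := fun h => hj (Fin.ext (h.trans hi0v.symm))
      omega
    have hminG0 : minG d p = G d p (wvec d i0) := by
      refine le_antisymm (minG_le hd0 p i0) (le_ciInf ?_)
      intro j
      rcases eq_or_ne j i0 with rfl | hj
      · exact le_refl _
      · exact le_of_lt (hGcomp j i0 (hstrict j hj))
    by_cases hall : ∀ m : Fin d, (D d i0 p) ^ 2 = (d : ℝ) * ((wvec d i0 m : ℝ) ^ 2 * (p m) ^ 2)
    · -- all stationarity equations hold : compute D_{i1}² = d+2 > d = D_{i0}², contradiction
      have hw00 : (wvec d i0 i0 : ℕ) = 1 := by rw [wvec_self, hi0v]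
      have hSd : (D d i0 p) ^ 2 = (d : ℝ) := by
        have h := hall i0
        rw [hw00, h1'] at h
        simpa using h
      have hdr : (d : ℝ) ≠ 0 := Nat.cast_ne_zero.mpr (by omega)
      have hunit : ∀ m, (wvec d i0 m : ℝ) ^ 2 * (p m) ^ 2 = 1 := by
        intro m
        have h := hall m
        rw [hSd] at h
        have h2 : (d : ℝ) * 1 = (d : ℝ) * ((wvec d i0 m : ℝ) ^ 2 * (p m) ^ 2) := by
          rw [mul_one]; exact h
        exact (mul_left_cancel₀ hdr h2).symm
      have hi01 : i0 ≠ i1 := by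
        intro h; have := congrArg Fin.val h; rw [hi0v, hi1v] at this; omega
      have hlt01 : i0 < i1 := by
        rw [Fin.lt_def, hi0v, hi1v]; omega
      have hval1 : ∀ i : Fin d, (wvec d i1 i : ℝ) ^ 2 * (p i) ^ 2
          = 1 + (if i = i0 then (-1 : ℝ) else 0) + (if i = i1 then (3 : ℝ) else 0) := by
        intro i
        rcases eq_or_ne i i0 with rfl | h0
        · have hw : wvec d i1 i0 = 0 := by simp [wvec, hlt01]
          rw [hw]
          simp [hi01]
        rcases eq_or_ne i i1 with rfl | hone
        · have hw : (wvec d i1 i1 : ℕ) = 2 := by rw [wvec_self, hi1v]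
          have hpi : (p i1) ^ 2 = 1 := by
            have h := hunit i1
            have hw' : (wvec d i0 i1 : ℕ) = 1 := by
              have hnlt : ¬ i1 < i0 := by rw [Fin.lt_def, hi0v, hi1v]; omega
              simp [wvec, hnlt, hi01.symm, hi1v]
            rw [hw'] at h
            simpa using h
          rw [hw, hpi]
          simp [h0]
          norm_num
        · have hvi : 2 ≤ (i : ℕ) := by
            have hv0 : (i : ℕ) ≠ 0 := fun h => h0 (Fin.ext (h.trans hi0v.symm))
            have hv1 : (i : ℕ) ≠ 1 := fun h => hone (Fin.ext (h.trans hi1v.symm))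
            omega
          have hnlt1 : ¬ i < i1 := by rw [Fin.lt_def, hi1v]; omega
          have hnlt0 : ¬ i < i0 := by rw [Fin.lt_def, hi0v]; omega
          have hw : (wvec d i1 i : ℕ) = (i : ℕ) := by simp [wvec, hnlt1, hone]
          have hw' : (wvec d i0 i : ℕ) = (i : ℕ) := by simp [wvec, hnlt0, h0]
          have h := hunit i
          rw [hw'] at h
          rw [hw, h]
          simp [h0, hone]
      have hD1 : (D d i1 p) ^ 2 = (d : ℝ) + 2 := by
        rw [D_sq, Finset.sum_congr rfl (fun i _ => hval1 i)]
        rw [Finset.sum_add_distrib, Finset.sum_add_distrib]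
        rw [Finset.sum_const, Finset.card_univ, Fintype.card_fin]
        rw [Finset.sum_ite_eq' Finset.univ i0 (fun _ => (-1 : ℝ))]
        rw [Finset.sum_ite_eq' Finset.univ i1 (fun _ => (3 : ℝ))]
        simp
        ring
      have hle : (D d i1 p) ^ 2 ≤ (D d i0 p) ^ 2 :=
        pow_le_pow_left₀ (le_of_lt (hDpos i1)) (hA i1) 2
      rw [hD1, hSd] at hle
      linarith
    · -- some stationarity equation fails : perturb there
      push_neg at hall
      obtain ⟨m, hm⟩ := hall
      set pm : ℝ := p m with hpmdef
      set B : ℝ := ∏ i ∈ Finset.univ.erase m, p i with hBdef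
      set a : ℝ := (wvec d i0 m : ℝ) ^ 2 with hadef
      set C : ℝ := ∑ i ∈ Finset.univ.erase m, (wvec d i0 i : ℝ) ^ 2 * (p i) ^ 2 with hCdef
      have hBpos : 0 < B := Finset.prod_pos (fun i _ => hp i)
      have hwm : wvec d i0 m ≠ 0 := by
        have hnlt : ¬ m < i0 := by rw [Fin.lt_def, hi0v]; omega
        rcases eq_or_ne m i0 with rfl | hm0
        · rw [wvec_self, hi0v]; omega
        · have : (wvec d i0 m : ℕ) = (m : ℕ) := by simp [wvec, hnlt, hm0]
          rw [this]
          exact fun h => hm0 (Fin.ext (h.trans hi0v.symm))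
      have hapos : 0 < a := by
        have : ((wvec d i0 m : ℕ) : ℝ) ≠ 0 := Nat.cast_ne_zero.mpr hwm
        rw [hadef]; positivity
      have hCnn : 0 ≤ C := Finset.sum_nonneg (fun i _ => by positivity)
      have hsplit : a * pm ^ 2 + C = ∑ i, (wvec d i0 i : ℝ) ^ 2 * (p i) ^ 2 := by
        rw [hadef, hpmdef, hCdef, ← sum_update' (wvec d i0) p m (p m), Function.update_eq_self]
      have hne' : a * pm ^ 2 + C ≠ (d : ℝ) * (a * pm ^ 2) := by
        rw [hsplit, ← D_sq]
        intro h
        exact hm (by rw [h, hadef, hpmdef])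
      set P : ℝ → Prop := fun x => (0 < x) ∧
        ∀ j : Fin d, j ≠ i0 → minG d p < G d (Function.update p m x) (wvec d j) with hPdef
      have hPev : ∀ᶠ x in nhds pm, P x := by
        refine Filter.Eventually.and (eventually_gt_nhds (hp m)) ?_
        rw [Filter.eventually_all]
        intro j
        by_cases hj : j = i0
        · exact Filter.Eventually.of_forall (fun x h => absurd hj h)
        · have hgt : minG d p < G d p (wvec d j) := by
            rw [hminG0]; exact hGcomp j i0 (hstrict j hj)
          exact (evG m j (minG d p) hgt).mono (fun x hx _ => hx)
      obtain ⟨x, hPx, hgx⟩ :=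
        exists_perturb B C a pm hBpos (hp m) hCnn hapos d hd1 hne' P hPev
      have hq : ∀ i, 0 < Function.update p m x i := by
        intro i
        rcases eq_or_ne i m with rfl | h
        · rw [Function.update_self]; exact hPx.1
        · rw [Function.update_of_ne h]; exact hp i
      have hGx : G d (Function.update p m x) (wvec d i0)
          = (x * B) / (Real.sqrt (a * x ^ 2 + C)) ^ d := by
        rw [G_update, hadef, hBdef, hCdef]
      have hGp : G d p (wvec d i0) = (pm * B) / (Real.sqrt (a * pm ^ 2 + C)) ^ d := by
        conv_lhs => rw [← Function.update_eq_self m p]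
        rw [G_update, hadef, hBdef, hCdef, hpmdef]
      have hsq : ∀ y : ℝ, ((y * B) / (Real.sqrt (a * y ^ 2 + C)) ^ d) ^ 2
          = (y * B) ^ 2 / (a * y ^ 2 + C) ^ d := by
        intro y
        have hay : (0:ℝ) ≤ a * y ^ 2 + C := add_nonneg (mul_nonneg hapos.le (sq_nonneg y)) hCnn
        rw [div_pow, ← pow_mul, mul_comm d 2, pow_mul, Real.sq_sqrt hay]
      have hlt : G d p (wvec d i0) < G d (Function.update p m x) (wvec d i0) := by
        have h2 : (G d p (wvec d i0)) ^ 2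
            < (G d (Function.update p m x) (wvec d i0)) ^ 2 := by
          rw [hGx, hGp, hsq, hsq]; exact hgx
        exact lt_of_pow_lt_pow_left₀ 2 (le_of_lt (G_pos hq i0)) h2
      apply key (Function.update p m x) hq
      intro j
      rcases eq_or_ne j i0 with rfl | hj
      · rw [hminG0]; exact hlt
      · exact hPx.2 j hj
  · -- Case B : D_0 is not the max; scale up p_0
    push_neg at hA
    obtain ⟨j1, hj1⟩ := hA
    set B : ℝ := ∏ i ∈ Finset.univ.erase i0, p i with hBdef
    have hBpos : 0 < B := Finset.prod_pos (fun i _ => hp i)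
    have hprodp : ∏ i, p i = B := by
      rw [← Finset.mul_prod_erase Finset.univ p (Finset.mem_univ i0), h1', one_mul]
    have hw0 : ∀ j : Fin d, j ≠ i0 → wvec d j i0 = 0 := by
      intro j hj
      have hlt : i0 < j := by
        rw [Fin.lt_def, hi0v]
        have : (j : ℕ) ≠ 0 := fun h => hj (Fin.ext (h.trans hi0v.symm))
        omega
      simp [wvec, hlt]
    have hsum0 : ∀ j : Fin d, j ≠ i0 →
        ∑ i ∈ Finset.univ.erase i0, (wvec d j i : ℝ) ^ 2 * (p i) ^ 2
          = ∑ i, (wvec d j i : ℝ) ^ 2 * (p i) ^ 2 := by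
      intro j hj
      exact Finset.sum_erase _ (by rw [hw0 j hj]; norm_num)
    have hGu : ∀ j : Fin d, j ≠ i0 → ∀ x : ℝ,
        G d (Function.update p i0 x) (wvec d j) = x * B / (D d j p) ^ d := by
      intro j hj x
      rw [G_update, hw0 j hj, hsum0 j hj]
      norm_num [D, hBdef]
    have hG0gt : minG d p < G d p (wvec d i0) :=
      lt_of_le_of_lt (minG_le hd0 p j1) (hGcomp i0 j1 hj1)
    have hev0 : ∀ᶠ x in nhds (p i0), minG d p < G d (Function.update p i0 x) (wvec d i0) :=
      evG i0 i0 (minG d p) hG0gt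
    have hev0' : ∀ᶠ x in nhdsWithin (p i0) (Set.Ioi (p i0)),
        minG d p < G d (Function.update p i0 x) (wvec d i0) :=
      hev0.filter_mono nhdsWithin_le_nhds
    have hmem : ∀ᶠ x in nhdsWithin (p i0) (Set.Ioi (p i0)), x ∈ Set.Ioi (p i0) :=
      eventually_mem_nhdsWithin
    obtain ⟨x, hx0, hxm⟩ := (hev0'.and hmem).exists
    have hx1 : 1 < x := by rw [← h1']; exact hxm
    have hq : ∀ i, 0 < Function.update p i0 x i := by
      intro i
      rcases eq_or_ne i i0 with rfl | h
      · rw [Function.update_self]; linarith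
      · rw [Function.update_of_ne h]; exact hp i
    apply key (Function.update p i0 x) hq
    intro j
    rcases eq_or_ne j i0 with rfl | hj
    · exact hx0
    · rw [hGu j hj x]
      have hGj : G d p (wvec d j) = B / (D d j p) ^ d := by rw [G_eq, hprodp]
      have hBB : B / (D d j p) ^ d < x * B / (D d j p) ^ d := by
        have h5 := mul_lt_mul_of_pos_right ((lt_mul_iff_one_lt_left hBpos).mpr hx1)
          (inv_pos.mpr (pow_pos (hDpos j) d))
        simpa [div_eq_mul_inv] using h5
      calc minG d p ≤ G d p (wvec d j) := minG_le hd0 p j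
        _ = B / (D d j p) ^ d := hGj
        _ < x * B / (D d j p) ^ d := hBB
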